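/- The element x of R is a regular element (not a zero divisor), x is invertible in k[x,x⁻¹][t], and the inclusion R ↪ k[x,x⁻¹][t] exhibits k[x,x⁻¹][t] as the localization of R at the multiplicative submonoid {xⁿ : n ≥ 0} of powers of x; that is, every element of k[x,x⁻¹][t] can be written as r·x^{−n} for some r ∈ R and n ≥ 0, and r·x^{−n} = 0 in k[x,x⁻¹][t] only if x^{m}·r = 0 in R for some m ≥ 0. -/

import Mathlib

/-- The subalgebra `R = k[x] + t·k[x,x⁻¹][t]` of `k[x,x⁻¹][t]`, consisting of
those polynomials in `t` whose constant coefficient (in `t`) lies in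
`k[x] ⊆ k[x,x⁻¹]`. -/
noncomputable def Rsub (k : Type*) [CommRing k] :
    Subalgebra k (Polynomial (LaurentPolynomial k)) :=
  Subalgebra.comap
    ((Polynomial.aeval (0 : LaurentPolynomial k)).restrictScalars k)
    (Polynomial.toLaurentAlg (R := k)).range

/-- The element `x` of `R`, i.e. the constant polynomial (in `t`) `x ∈ k[x,x⁻¹]`. -/
noncomputable def xR (k : Type*) [CommRing k] : Rsub k :=
  ⟨Polynomial.C (LaurentPolynomial.T (R := k) 1), by
    simp only [Rsub, Subalgebra.mem_comap, AlgHom.coe_restrictScalars', Polynomial.aeval_C]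
    exact ⟨Polynomial.X, by simp [Polynomial.toLaurentAlg_apply, Polynomial.toLaurent_X]⟩⟩

/-- The claim `R[S₁⁻¹] = k[x,x⁻¹][t]`, `S₁ = {xⁿ}`, of Section 5 of the paper:
`x` is a regular element of `R`, `x` is invertible in `k[x,x⁻¹][t]`, and the
inclusion `R ↪ k[x,x⁻¹][t]` exhibits `k[x,x⁻¹][t]` as the localization of `R`
at the multiplicative submonoid of powers of `x`: every element of
`k[x,x⁻¹][t]` is of the form `r·x⁻ⁿ` with `r ∈ R`, `n ≥ 0`, and `r·x⁻ⁿ = 0`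
only if `xᵐ·r = 0` in `R` for some `m ≥ 0`. -/
lemma mem_Rsub_iff (k : Type*) [CommRing k] (s : Polynomial (LaurentPolynomial k)) :
    s ∈ Rsub k ↔ ∃ p : Polynomial k, Polynomial.toLaurent p = s.coeff 0 := by
  simp only [Rsub, Subalgebra.mem_comap, AlgHom.coe_restrictScalars', AlgHom.mem_range,
    Polynomial.toLaurentAlg_apply, Polynomial.coeff_zero_eq_aeval_zero]

lemma clear_denominator (k : Type*) [CommRing k] (s : Polynomial (LaurentPolynomial k)) :
    ∃ n : ℕ, s * (Polynomial.C (LaurentPolynomial.T (R := k) 1)) ^ n ∈ Rsub k := by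
  obtain ⟨n, p, hp⟩ := (s.coeff 0).exists_T_pow
  refine ⟨n, (mem_Rsub_iff k _).2 ⟨p, ?_⟩⟩
  rw [← Polynomial.C_pow, Polynomial.coeff_mul_C, LaurentPolynomial.T_pow, mul_one, hp]

lemma xR_unit (k : Type*) [CommRing k] :
    IsUnit ((xR k : Polynomial (LaurentPolynomial k))) := by
  have : IsUnit (LaurentPolynomial.T (R := k) 1) := LaurentPolynomial.isUnit_T 1
  exact this.map Polynomial.C

theorem stmt3 (k : Type*) [CommRing k] :
    IsRegular (xR k) ∧
    IsUnit ((xR k : Polynomial (LaurentPolynomial k))) ∧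
    IsLocalization (Submonoid.powers (xR k)) (Polynomial (LaurentPolynomial k)) ∧
    (∀ s : Polynomial (LaurentPolynomial k), ∃ (r : Rsub k) (n : ℕ),
      s * (xR k : Polynomial (LaurentPolynomial k)) ^ n = (r : Polynomial (LaurentPolynomial k))) ∧
    (∀ (r : Rsub k) (n : ℕ) (s : Polynomial (LaurentPolynomial k)),
      s * (xR k : Polynomial (LaurentPolynomial k)) ^ n = (r : Polynomial (LaurentPolynomial k)) →
      s = 0 → ∃ m : ℕ, xR k ^ m * r = 0) := by
  have hinj : Function.Injective ((Rsub k).val : Rsub k →ₐ[k] _) := Subtype.val_injective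
  have hu := xR_unit k
  have surj : ∀ s : Polynomial (LaurentPolynomial k), ∃ (r : Rsub k) (n : ℕ),
      s * (xR k : Polynomial (LaurentPolynomial k)) ^ n = (r : Polynomial (LaurentPolynomial k)) := by
    intro s
    obtain ⟨n, hn⟩ := clear_denominator k s
    exact ⟨⟨_, hn⟩, n, rfl⟩
  refine ⟨?_, hu, ?_, surj, ?_⟩
  · constructor
    · intro a b h
      apply hinj
      have := congrArg ((Rsub k).val) h
      simp only [map_mul] at this
      exact hu.mul_left_cancel this
    · intro a b h
      apply hinj
      have := congrArg ((Rsub k).val) h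
      simp only [map_mul] at this
      rw [mul_comm ((Rsub k).val a), mul_comm ((Rsub k).val b)] at this
      exact hu.mul_left_cancel this
  · refine ⟨⟨?_, ?_, ?_⟩⟩
    · rintro ⟨y, m, rfl⟩
      simpa using (hu.pow m)
    · intro z
      obtain ⟨r, n, h⟩ := surj z
      exact ⟨⟨r, ⟨xR k ^ n, ⟨n, rfl⟩⟩⟩, by simpa using h⟩
    · intro a b h
      refine ⟨1, ?_⟩
      simp only [OneMemClass.coe_one, one_mul]
      exact hinj h
  · rintro r n s h rfl
    refine ⟨0, ?_⟩
    apply hinj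
    simp only [pow_zero, one_mul, map_zero]
    simpa using h.symm
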